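/- Every reciprocal pointer chain is a plateau: if (v_1,…,v_n) is an RPC, then for all 1 ≤ i < n, (v_i,v_{i+1}) ∈ E and c(p_{s,v_i,t}) = c(p_{s,v_{i+1},t}). -/

import Mathlib

variable {V : Type*}

/-- `p` is a path from `u` to `w` in the digraph with edge relation `E`:
a nonempty finite sequence of vertices beginning at `u` and ending at `w`
in which every consecutive pair of vertices is an edge. -/
def IsPath (E : V → V → Prop) (p : List V) (u w : V) : Prop :=
  p ≠ [] ∧ p.head? = some u ∧ p.getLast? = some w ∧ p.Chain' E

/-- The cost of a path: the sum of the weights of its edges. -/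
def pathCost (c : V → V → ℝ) (p : List V) : ℝ :=
  ((p.zip p.tail).map fun e => c e.1 e.2).sum

/-- A shortest path from `u` to `w`: a path from `u` to `w` of minimum cost. -/
def IsShortestPath (E : V → V → Prop) (c : V → V → ℝ) (p : List V) (u w : V) : Prop :=
  IsPath E p u w ∧ ∀ q, IsPath E q u w → pathCost c p ≤ pathCost c q

/-- A via-path for `v`: an `s`–`t` path of minimum cost among all `s`–`t`
paths passing through `v`. -/
def IsViaPath (E : V → V → Prop) (c : V → V → ℝ) (s t v : V) (p : List V) : Prop :=
  IsPath E p s t ∧ v ∈ p ∧ ∀ q, IsPath E q s t → v ∈ q → pathCost c p ≤ pathCost c q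

/-- The minimum cost of an `s`–`t` path passing through `v`. -/
noncomputable def viaCost (E : V → V → Prop) (c : V → V → ℝ) (s t v : V) : ℝ :=
  sInf (pathCost c '' {p | IsPath E p s t ∧ v ∈ p})

/-- A predecessor shortest path tree rooted at the source `s`: a map `b`
assigning to each vertex `v ≠ s` a vertex `b v` with an edge from `b v` to `v`,
such that iterating `b` from any `v` terminates at `s` and the resulting path
`pathTo v` (read from `s` to `v`) is a shortest path from `s` to `v`. -/
structure PredSPT (E : V → V → Prop) (c : V → V → ℝ) (s : V) where
  b : V → V
  pathTo : V → List V
  edge : ∀ v, v ≠ s → E (b v) v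
  pathTo_src : pathTo s = [s]
  pathTo_step : ∀ v, v ≠ s → pathTo v = pathTo (b v) ++ [v]
  shortest : ∀ v, IsShortestPath E c (pathTo v) s v

/-- A successor shortest path tree rooted at the target `t`: a map `f`
assigning to each vertex `v ≠ t` a vertex `f v` with an edge from `v` to `f v`,
such that iterating `f` from any `v` terminates at `t` and the resulting path
`pathFrom v` is a shortest path from `v` to `t`. -/
structure SuccSPT (E : V → V → Prop) (c : V → V → ℝ) (t : V) where
  f : V → V
  pathFrom : V → List V
  edge : ∀ v, v ≠ t → E v (f v)
  pathFrom_tgt : pathFrom t = [t]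
  pathFrom_step : ∀ v, v ≠ t → pathFrom v = v :: pathFrom (f v)
  shortest : ∀ v, IsShortestPath E c (pathFrom v) v t

variable {E : V → V → Prop} {c : V → V → ℝ} {s t : V}

/-- The cascading via-path (CVP) of a vertex `v`: the tree path `p̃_{s,v}`
followed by the tree path `p̃_{v,t}`. -/
def CVP (B : PredSPT E c s) (F : SuccSPT E c t) (v : V) : List V :=
  B.pathTo v ++ (F.pathFrom v).tail

/-- A reciprocal pointer chain (RPC): a nonempty sequence of vertices
`(v_1, …, v_n)` such that for all `1 ≤ i < n`, `b (v_{i+1}) = v_i` and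
`f (v_i) = v_{i+1}` (as pointers of the two shortest path trees, so in
particular `v_{i+1} ≠ s` and `v_i ≠ t`). -/
def IsRPC (B : PredSPT E c s) (F : SuccSPT E c t) (r : List V) : Prop :=
  r ≠ [] ∧ r.Chain' fun x y => y ≠ s ∧ x ≠ t ∧ B.b y = x ∧ F.f x = y

/-- A maximal RPC: an RPC whose set of vertices is not a (strict) subset of the
vertex set of any other RPC. -/
def IsMaximalRPC [DecidableEq V] (B : PredSPT E c s) (F : SuccSPT E c t)
    (r : List V) : Prop :=
  IsRPC B F r ∧
    ∀ r', IsRPC B F r' → r.toFinset ⊆ r'.toFinset → r'.toFinset = r.toFinset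

/-- The Jaccard distance between the vertex sets of two paths. -/
noncomputable def jaccardDist [DecidableEq V] (p q : List V) : ℝ :=
  1 - ((p.toFinset ∩ q.toFinset).card : ℝ) / ((p.toFinset ∪ q.toFinset).card : ℝ)

/-- A plateau: a nonempty sequence of vertices in which every consecutive pair
is an edge and all vertices have the same minimum via-path cost. -/
def IsPlateau (E : V → V → Prop) (c : V → V → ℝ) (s t : V) (q : List V) : Prop :=
  q ≠ [] ∧ q.Chain' fun x y => E x y ∧ viaCost E c s t x = viaCost E c s t y

/-- A maximal plateau: a plateau whose set of vertices is not a (strict) subset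
of the vertex set of any other plateau. -/
def IsMaximalPlateau [DecidableEq V] (E : V → V → Prop) (c : V → V → ℝ)
    (s t : V) (q : List V) : Prop :=
  IsPlateau E c s t q ∧
    ∀ q', IsPlateau E c s t q' → q.toFinset ⊆ q'.toFinset → q'.toFinset = q.toFinset


section Aux

lemma head?_cons_tail (l : List V) (a : V) (h : l.head? = some a) : l = a :: l.tail := by
  cases l <;> simp_all

lemma mem_of_getLast?' {l : List V} {a : V} (h : l.getLast? = some a) : a ∈ l := by
  induction l with
  | nil => simp at h
  | cons x xs ih =>
    cases xs with
    | nil => simp_all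
    | cons y ys => simp only [List.getLast?_cons_cons] at h; simp [ih h]

lemma pathCost_cons_cons (c : V → V → ℝ) (a b : V) (l : List V) :
    pathCost c (a :: b :: l) = c a b + pathCost c (b :: l) := by
  simp [pathCost]

lemma pathCost_append (c : V → V → ℝ) {p q : List V} {v : V}
    (hp : p.getLast? = some v) (hq : q.head? = some v) :
    pathCost c (p ++ q.tail) = pathCost c p + pathCost c q := by
  induction p with
  | nil => simp at hp
  | cons a l ih =>
    cases l with
    | nil =>
      simp only [List.getLast?_singleton, Option.some.injEq] at hp
      subst hp
      rw [List.singleton_append, ← head?_cons_tail q a hq]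
      simp [pathCost]
    | cons b l' =>
      rw [List.getLast?_cons_cons] at hp
      rw [List.cons_append, List.cons_append]
      have h2 : b :: (l' ++ q.tail) = (b :: l') ++ q.tail := rfl
      rw [pathCost_cons_cons, h2, ih hp, pathCost_cons_cons]
      ring

lemma isPath_append {E : V → V → Prop} {p q : List V} {u v w : V}
    (hp : IsPath E p u v) (hq : IsPath E q v w) :
    IsPath E (p ++ q.tail) u w := by
  obtain ⟨hp0, hph, hpl, hpc⟩ := hp
  obtain ⟨hq0, hqh, hql, hqc⟩ := hq
  have hq' : q = v :: q.tail := head?_cons_tail q v hqh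
  refine ⟨by simp [hp0], ?_, ?_, ?_⟩
  · rw [List.head?_append_of_ne_nil _ hp0, hph]
  · rcases eq_or_ne q.tail [] with h | h
    · rw [h, List.append_nil, hpl]
      rw [hq', h] at hql
      simpa using hql
    · rw [List.getLast?_append_of_ne_nil _ h]
      rw [hq'] at hql
      obtain ⟨a, l, h2⟩ := List.exists_cons_of_ne_nil h
      rw [h2] at hql ⊢
      rwa [List.getLast?_cons_cons] at hql
  · change List.IsChain E _; rw [List.isChain_append]
    refine ⟨hpc, ?_, ?_⟩
    · rw [hq'] at hqc
      exact (List.isChain_cons.mp hqc).2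
    · intro x hx y hy
      rw [hpl] at hx
      simp only [Option.mem_def, Option.some.injEq] at hx
      subst hx
      rw [hq'] at hqc
      exact (List.isChain_cons.mp hqc).1 y hy

/-- Splitting an `s`–`t` path at a vertex `v` it passes through. -/
lemma isPath_split {E : V → V → Prop} {p : List V} {u w v : V}
    (hp : IsPath E p u w) (hv : v ∈ p) :
    ∃ p1 p2, p = p1 ++ (v :: p2).tail ∧ IsPath E p1 u v ∧ IsPath E (v :: p2) v w ∧
      p1.getLast? = some v := by
  obtain ⟨l1, l2, rfl⟩ := List.append_of_mem hv
  obtain ⟨hp0, hph, hpl, hpc⟩ := hp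
  refine ⟨l1 ++ [v], l2, by simp, ⟨by simp, ?_, by simp, ?_⟩, ⟨by simp, by simp, ?_, ?_⟩,
    by simp⟩
  · rcases eq_or_ne l1 [] with h | h
    · subst h; simpa using hph
    · rw [List.head?_append_of_ne_nil _ h]
      rwa [List.head?_append_of_ne_nil _ h] at hph
  · have : l1 ++ v :: l2 = (l1 ++ [v]) ++ l2 := by simp
    rw [this] at hpc; change List.IsChain E _ at hpc; rw [List.isChain_append] at hpc
    exact hpc.1
  · rwa [List.getLast?_append_of_ne_nil _ (List.cons_ne_nil v l2)] at hpl
  · have : l1 ++ v :: l2 = (l1 ++ [v]) ++ l2 := by simp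
    rw [this] at hpc; change List.IsChain E _ at hpc; rw [List.isChain_append] at hpc
    change List.IsChain E _; rw [List.isChain_cons]
    refine ⟨?_, hpc.2.1⟩
    intro y hy
    exact hpc.2.2 v (by simp) y hy

end Aux

/-- The CVP of `v` is an `s`–`t` path through `v` achieving the minimum via-cost. -/
lemma viaCost_eq_pathCost_CVP {E : V → V → Prop} {c : V → V → ℝ} {s t : V}
    (B : PredSPT E c s) (F : SuccSPT E c t) (v : V) :
    viaCost E c s t v = pathCost c (CVP B F v) := by
  have hB := B.shortest v
  have hF := F.shortest v
  have hBl : (B.pathTo v).getLast? = some v := hB.1.2.2.1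
  have hFh : (F.pathFrom v).head? = some v := hF.1.2.1
  have hCVPpath : IsPath E (CVP B F v) s t := isPath_append hB.1 hF.1
  have hmem : v ∈ CVP B F v := by
    exact List.mem_append_left _ (mem_of_getLast?' hBl)
  have hcost : pathCost c (CVP B F v) = pathCost c (B.pathTo v) + pathCost c (F.pathFrom v) :=
    pathCost_append c hBl hFh
  have hlb : ∀ x ∈ pathCost c '' {p | IsPath E p s t ∧ v ∈ p},
      pathCost c (CVP B F v) ≤ x := by
    rintro x ⟨p, ⟨hp, hvp⟩, rfl⟩
    obtain ⟨p1, p2, hpe, hp1, hp2, hgl⟩ := isPath_split hp hvp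
    have : pathCost c p = pathCost c p1 + pathCost c (v :: p2) := by
      rw [hpe]; exact pathCost_append c hgl (by simp)
    rw [this, hcost]
    exact add_le_add (hB.2 p1 hp1) (hF.2 _ hp2)
  have hne : pathCost c (CVP B F v) ∈ pathCost c '' {p | IsPath E p s t ∧ v ∈ p} :=
    ⟨CVP B F v, ⟨hCVPpath, hmem⟩, rfl⟩
  exact le_antisymm (csInf_le ⟨_, hlb⟩ hne) (le_csInf ⟨_, hne⟩ hlb)

/-- Every reciprocal pointer chain is a plateau: each consecutive
pair of its vertices is an edge of `G` and the two vertices have equal minimum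
via-path cost. -/
theorem rpc_is_plateau [Fintype V] [DecidableEq V]
    {E : V → V → Prop} {c : V → V → ℝ} {s t : V}
    (hc : ∀ u w, E u w → 0 ≤ c u w)
    (B : PredSPT E c s) (F : SuccSPT E c t)
    (r : List V) (hr : IsRPC B F r) :
    r.Chain' fun x y => E x y ∧ viaCost E c s t x = viaCost E c s t y := by
  refine hr.2.imp ?_
  rintro x y ⟨hys, hxt, hby, hfx⟩
  have hE : E x y := hfx ▸ F.edge x hxt
  refine ⟨hE, ?_⟩
  have hCVP : CVP B F x = CVP B F y := by
    have h1 : F.pathFrom x = x :: F.pathFrom (F.f x) := F.pathFrom_step x hxt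
    have h2 : B.pathTo y = B.pathTo (B.b y) ++ [y] := B.pathTo_step y hys
    have h3 : F.pathFrom y = y :: (F.pathFrom y).tail :=
      head?_cons_tail _ y (F.shortest y).1.2.1
    rw [CVP, CVP, h1, h2, hby, hfx]
    rw [List.append_assoc, List.tail_cons, List.singleton_append, ← h3]
  rw [viaCost_eq_pathCost_CVP B F x, viaCost_eq_pathCost_CVP B F y, hCVP]
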